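/- Let f be a continuous positive density on ℝ that is decreasing-increasing: there is x₀ ∈ ℝ such that f is nonincreasing on (−∞, x₀] and nondecreasing on [x₀, +∞). Then for every V > 0 an isoperimetric region of volume V exists, and every isoperimetric region of volume V is a bounded open interval whose closure contains a point where f attains its global minimum. -/

import Mathlib

open Filter MeasureTheory Set

noncomputable def wvol (f : ℝ → ℝ) (Ω : Set ℝ) : ENNReal :=
  ∫⁻ x in Ω, ENNReal.ofReal (f x)

noncomputable def wper (f : ℝ → ℝ) (Ω : Set ℝ) : ENNReal :=
  ∑' x : frontier Ω, ENNReal.ofReal (f x)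

def IsIsopRegion (f : ℝ → ℝ) (Ω : Set ℝ) (V : ENNReal) : Prop :=
  IsOpen Ω ∧ wvol f Ω = V ∧
    ∀ U : Set ℝ, IsOpen U → wvol f U = V → wper f Ω ≤ wper f U

lemma wvol_mono (f : ℝ → ℝ) {U W : Set ℝ} (h : U ⊆ W) : wvol f U ≤ wvol f W :=
  lintegral_mono_set h

lemma wvol_Ioo (f : ℝ → ℝ) (hcont : Continuous f) (hnn : ∀ x, 0 ≤ f x) {a b : ℝ} (hab : a ≤ b) :
    wvol f (Ioo a b) = ENNReal.ofReal (∫ x in a..b, f x) := by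
  rw [wvol, Measure.restrict_congr_set Ioo_ae_eq_Ioc,
    ← MeasureTheory.ofReal_integral_eq_lintegral_ofReal
      (hcont.integrableOn_Ioc) (Eventually.of_forall fun x => hnn x),
    intervalIntegral.integral_of_le hab]

lemma wper_Ioo (f : ℝ → ℝ) {a b : ℝ} (hab : a < b) :
    wper f (Ioo a b) = ENNReal.ofReal (f a) + ENNReal.ofReal (f b) := by
  rw [wper, tsum_subtype (frontier (Ioo a b)) (fun x => ENNReal.ofReal (f x)), frontier_Ioo hab]
  rw [tsum_eq_sum (s := {a, b}) (by
    intro x hx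
    simp only [Finset.mem_insert, Finset.mem_singleton] at hx
    exact indicator_of_notMem (by simpa using hx) _)]
  rw [Finset.sum_pair hab.ne]
  rw [indicator_of_mem (by simp), indicator_of_mem (by simp)]

lemma sum_le_wper (f : ℝ → ℝ) {Ω : Set ℝ} (s : Finset ℝ) (hs : ↑s ⊆ frontier Ω) :
    ∑ x ∈ s, ENNReal.ofReal (f x) ≤ wper f Ω := by
  rw [wper, tsum_subtype (frontier Ω) (fun x => ENNReal.ofReal (f x))]
  calc ∑ x ∈ s, ENNReal.ofReal (f x)
      = ∑ x ∈ s, (frontier Ω).indicator (fun x => ENNReal.ofReal (f x)) x := by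
        refine Finset.sum_congr rfl fun x hx => ?_
        rw [indicator_of_mem (hs hx)]
    _ ≤ _ := ENNReal.sum_le_tsum s

lemma wvol_Ioi_top (f : ℝ → ℝ) {m : ℝ} (hmpos : 0 < m) (hm : ∀ x, m ≤ f x) (t : ℝ) :
    wvol f (Set.Ioi t) = ⊤ := by
  have h1 : (∫⁻ x in Set.Ioi t, ENNReal.ofReal m) ≤ ∫⁻ x in Set.Ioi t, ENNReal.ofReal (f x) :=
    lintegral_mono fun x => ENNReal.ofReal_le_ofReal (hm x)
  rw [setLIntegral_const, Real.volume_Ioi,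
    ENNReal.mul_top ((ENNReal.ofReal_pos.mpr hmpos).ne')] at h1
  exact top_le_iff.mp h1

lemma wvol_Iio_top (f : ℝ → ℝ) {m : ℝ} (hmpos : 0 < m) (hm : ∀ x, m ≤ f x) (t : ℝ) :
    wvol f (Set.Iio t) = ⊤ := by
  have h1 : (∫⁻ x in Set.Iio t, ENNReal.ofReal m) ≤ ∫⁻ x in Set.Iio t, ENNReal.ofReal (f x) :=
    lintegral_mono fun x => ENNReal.ofReal_le_ofReal (hm x)
  rw [setLIntegral_const, Real.volume_Iio,
    ENNReal.mul_top ((ENNReal.ofReal_pos.mpr hmpos).ne')] at h1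
  exact top_le_iff.mp h1

lemma preconn_subset {U s : Set ℝ} (hU : IsOpen U) (hs : IsPreconnected s)
    (hdisj : ∀ x ∈ s, x ∉ frontier U) (hne : (s ∩ U).Nonempty) : s ⊆ U := by
  refine hs.subset_left_of_subset_union hU (isClosed_closure (s := U)).isOpen_compl
    (disjoint_compl_right.mono_left subset_closure) ?_ hne
  intro x hx
  rcases em (x ∈ closure U) with h | h
  · left
    have := hdisj x hx
    rw [hU.frontier_eq] at this
    simpa [h] using this
  · exact Or.inr h

lemma frontier_finite {f : ℝ → ℝ} {m : ℝ} (hmpos : 0 < m) (hm : ∀ x, m ≤ f x)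
    {U : Set ℝ} (hper : wper f U ≠ ⊤) : (frontier U).Finite := by
  by_contra hinf
  rw [← Set.not_infinite, not_not] at hinf
  have : Infinite (frontier U) := hinf.to_subtype
  have h1 : (∑' _ : frontier U, ENNReal.ofReal m) ≤ ∑' x : frontier U, ENNReal.ofReal (f x) :=
    ENNReal.tsum_le_tsum fun x => ENNReal.ofReal_le_ofReal (hm x)
  rw [ENNReal.tsum_const_eq_top_of_ne_zero ((ENNReal.ofReal_pos.mpr hmpos).ne')] at h1
  exact hper (top_le_iff.mp h1)

lemma structure_lemma {f : ℝ → ℝ} {m : ℝ} (hmpos : 0 < m) (hm : ∀ x, m ≤ f x)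
    {U : Set ℝ} (hU : IsOpen U) (hvol0 : wvol f U ≠ 0) (hvoltop : wvol f U ≠ ⊤)
    (hper : wper f U ≠ ⊤) :
    ∃ u w : ℝ, u < w ∧ U ⊆ Set.Ioo u w ∧ u ∈ frontier U ∧ w ∈ frontier U ∧
      (U = Set.Ioo u w ∨ ∃ z ∈ frontier U, z ≠ u ∧ z ≠ w) := by
  have hUne : U.Nonempty := by
    rcases eq_empty_or_nonempty U with h | h
    · exact absurd (by simp [wvol, h]) hvol0
    · exact h
  have hUnuniv : U ≠ univ := by
    intro h
    exact hvoltop (top_le_iff.mp (wvol_Ioi_top f hmpos hm 0 ▸ wvol_mono f (h ▸ subset_univ _)))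
  have hfr : (frontier U).Nonempty := by
    rw [nonempty_frontier_iff]
    exact ⟨hUne, hUnuniv⟩
  have hfin : (frontier U).Finite := frontier_finite hmpos hm hper
  set F := hfin.toFinset with hF
  have hFne : F.Nonempty := by
    rwa [← Finset.coe_nonempty, hfin.coe_toFinset]
  set u := F.min' hFne with hu
  set w := F.max' hFne with hw
  have humem : u ∈ frontier U := by
    have := F.min'_mem hFne; rwa [← hfin.mem_toFinset]
  have hwmem : w ∈ frontier U := by
    have := F.max'_mem hFne; rwa [← hfin.mem_toFinset]
  have hnotmem : ∀ x ∈ frontier U, x ∉ U := by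
    intro x hx hxU
    rw [hU.frontier_eq] at hx
    exact hx.2 hxU
  have hsub : U ⊆ Set.Ioo u w := by
    intro x hx
    constructor
    · rcases lt_trichotomy u x with h | h | h
      · exact h
      · exact absurd hx (h ▸ hnotmem u humem)
      · exfalso
        have : Set.Iio u ⊆ U := by
          refine preconn_subset hU isPreconnected_Iio ?_ ⟨x, h, hx⟩
          intro z hz hzfr
          exact absurd (F.min'_le z (hfin.mem_toFinset.mpr hzfr)) (not_le.mpr hz)
        exact hvoltop (top_le_iff.mp (wvol_Iio_top f hmpos hm u ▸ wvol_mono f this))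
    · rcases lt_trichotomy x w with h | h | h
      · exact h
      · exact absurd hx (h ▸ hnotmem w hwmem)
      · exfalso
        have : Set.Ioi w ⊆ U := by
          refine preconn_subset hU isPreconnected_Ioi ?_ ⟨x, h, hx⟩
          intro z hz hzfr
          exact absurd (F.le_max' z (hfin.mem_toFinset.mpr hzfr)) (not_le.mpr hz)
        exact hvoltop (top_le_iff.mp (wvol_Ioi_top f hmpos hm w ▸ wvol_mono f this))
  have huw : u < w := by
    obtain ⟨x, hx⟩ := hUne
    exact (hsub hx).1.trans (hsub hx).2
  refine ⟨u, w, huw, hsub, humem, hwmem, ?_⟩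
  by_cases h : ∃ z ∈ frontier U, z ≠ u ∧ z ≠ w
  · exact Or.inr h
  · left
    push_neg at h
    have hfr_sub : frontier U ⊆ {u, w} := by
      intro z hz
      rcases em (z = u) with h1 | h1
      · exact Or.inl h1
      · exact Or.inr (h z hz h1)
    refine subset_antisymm hsub ?_
    refine preconn_subset hU isPreconnected_Ioo ?_ ?_
    · intro z hz hzfr
      rcases hfr_sub hzfr with h1 | h1 <;> subst h1
      · exact lt_irrefl _ hz.1
      · exact lt_irrefl _ hz.2
    · obtain ⟨x, hx⟩ := hUne
      exact ⟨x, hsub hx, hx⟩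

/-- For a decreasing-increasing density on `ℝ` (nonincreasing on
`(−∞, x₀]` and nondecreasing on `[x₀, +∞)`), isoperimetric regions of any volume
`V > 0` exist and every minimizer is a bounded open interval in whose closure `f`
attains its global minimum. -/
theorem minimizers_decreasing_increasing_density
    (f : ℝ → ℝ) (hcont : Continuous f) (hpos : ∀ x, 0 < f x) (x₀ : ℝ)
    (hanti : ∀ x y : ℝ, x ≤ y → y ≤ x₀ → f y ≤ f x)
    (hmono : ∀ x y : ℝ, x₀ ≤ x → x ≤ y → f x ≤ f y)
    (V : ℝ) (hV : 0 < V) :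
    (∃ Ω : Set ℝ, IsIsopRegion f Ω (ENNReal.ofReal V)) ∧
    ∀ Ω : Set ℝ, IsIsopRegion f Ω (ENNReal.ofReal V) →
      ∃ a b : ℝ, a < b ∧ Ω = Set.Ioo a b ∧
        ∃ c ∈ Set.Icc a b, ∀ y : ℝ, f c ≤ f y := by
  set m := f x₀ with hmdef
  have hmpos : 0 < m := hpos x₀
  have hm : ∀ x, m ≤ f x := by
    intro x
    rcases le_total x x₀ with h | h
    · exact hanti x x₀ h le_rfl
    · exact hmono x₀ x le_rfl h
  set G : ℝ → ℝ := fun t => ∫ x in x₀..t, f x with hGdef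
  have hGc : Continuous G :=
    intervalIntegral.continuous_primitive (fun a b => hcont.intervalIntegrable a b) x₀
  have hGd : ∀ u w : ℝ, G w - G u = ∫ x in u..w, f x := by
    intro u w
    show (∫ x in x₀..w, f x) - (∫ x in x₀..u, f x) = _
    rw [← intervalIntegral.integral_add_adjacent_intervals (a := x₀) (b := u) (c := w)
        (hcont.intervalIntegrable _ _) (hcont.intervalIntegrable _ _)]
    ring
  have hGmono : StrictMono G := by
    intro u w h
    have h1 : 0 < ∫ x in u..w, f x :=
      intervalIntegral.intervalIntegral_pos_of_pos (hcont.intervalIntegrable _ _) hpos h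
    have := hGd u w
    linarith
  have hGlb : ∀ u w : ℝ, u ≤ w → m * (w - u) ≤ G w - G u := by
    intro u w h
    rw [hGd u w]
    have := intervalIntegral.integral_mono_on (f := fun _ => m) (g := f) h
      (_root_.intervalIntegrable_const (c := m) (μ := volume) (a := u) (b := w))
      (hcont.intervalIntegrable _ _) (fun x _ => hm x)
    simpa [mul_comm] using this
  have hvolG : ∀ u w : ℝ, u ≤ w → wvol f (Ioo u w) = ENNReal.ofReal (G w - G u) := by
    intro u w h
    rw [wvol_Ioo f hcont (fun x => (hpos x).le) h, hGd u w]
  have hIVT : ∀ u w T : ℝ, u ≤ w → G u ≤ T → T ≤ G w → ∃ z, z ∈ Icc u w ∧ G z = T := by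
    intro u w T huw h1 h2
    obtain ⟨z, hz1, hz2⟩ := intermediate_value_Icc huw (hGc.continuousOn) ⟨h1, h2⟩
    exact ⟨z, hz1, hz2⟩
  have hnext : ∀ a : ℝ, ∃ c, a < c ∧ G c - G a = V := by
    intro a
    have hb : a ≤ a + V / m := by
      have := div_pos hV hmpos; linarith
    have h2 : G a + V ≤ G (a + V / m) := by
      have h := hGlb a (a + V / m) hb
      have hme : m * (a + V / m - a) = V := by field_simp; ring
      linarith [h, hme]
    obtain ⟨c, _, hc2⟩ := hIVT a (a + V / m) (G a + V) hb (by linarith) h2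
    refine ⟨c, ?_, by linarith⟩
    by_contra h
    push_neg at h
    have := hGmono.monotone h
    linarith
  have hprev : ∀ b : ℝ, ∃ a, a < b ∧ G b - G a = V := by
    intro b
    have hb : b - V / m ≤ b := by
      have : 0 < V / m := by positivity
      linarith
    have h2 : G (b - V / m) ≤ G b - V := by
      have h := hGlb (b - V / m) b hb
      have hme : m * (b - (b - V / m)) = V := by field_simp; ring
      linarith [h, hme]
    obtain ⟨a, _, ha2⟩ := hIVT (b - V / m) b (G b - V) hb h2 (by linarith)
    refine ⟨a, ?_, by linarith⟩
    by_contra h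
    push_neg at h
    have := hGmono.monotone h
    linarith
  -- interval selection
  have hselect : ∀ u w : ℝ, u < w → V ≤ G w - G u →
      ∃ α β, α < β ∧ G β - G α = V ∧ f α ≤ f u ∧ f β ≤ f w := by
    intro u w huw hVle
    rcases le_or_gt (G x₀) (G u + V) with hcase | hcase
    · obtain ⟨β, hβmem, hβ⟩ := hIVT u w (G u + V) huw.le (by linarith) (by linarith)
      have huβ : u < β := by
        by_contra h
        push_neg at h
        have := hGmono.monotone h
        linarith
      have hx₀β : x₀ ≤ β := by
        by_contra h
        push_neg at h
        have := hGmono h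
        linarith
      exact ⟨u, β, huβ, by linarith, le_rfl, hmono β w hx₀β hβmem.2⟩
    · rcases le_or_gt (G x₀) (G w) with hcase2 | hcase2
      · obtain ⟨α, hαmem, hα⟩ := hIVT u w (G x₀ - V) huw.le (by linarith) (by linarith)
        have hαx₀ : α < x₀ := by
          by_contra h
          push_neg at h
          have := hGmono.monotone h
          linarith
        exact ⟨α, x₀, hαx₀, by linarith, hanti u α hαmem.1 hαx₀.le, hm w⟩
      · have hwx₀ : w < x₀ := by
          by_contra h
          push_neg at h
          exact absurd (hGmono.monotone h) (not_le.mpr hcase2)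
        obtain ⟨α, hαmem, hα⟩ := hIVT u w (G w - V) huw.le (by linarith) (by linarith)
        have hαw : α < w := by
          by_contra h
          push_neg at h
          have := hGmono.monotone h
          linarith
        exact ⟨α, w, hαw, by linarith, hanti u α hαmem.1 (hαw.le.trans hwx₀.le), le_rfl⟩
  -- the optimal interval via compactness
  obtain ⟨a₁, ha₁x₀, ha₁⟩ : ∃ a₁, a₁ < x₀ ∧ G x₀ - G a₁ = V := hprev x₀
  set C : Set (ℝ × ℝ) :=
    (Icc a₁ x₀ ×ˢ Icc a₁ (x₀ + V / m)) ∩ {r : ℝ × ℝ | G r.2 - G r.1 = V} with hCdef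
  have hx₀ub : G x₀ + V ≤ G (x₀ + V / m) := by
    have h := hGlb x₀ (x₀ + V / m) (by have := div_pos hV hmpos; linarith)
    have hme : m * (x₀ + V / m - x₀) = V := by field_simp; ring
    linarith [h, hme]
  have hCcomp : IsCompact C := by
    refine (isCompact_Icc.prod isCompact_Icc).inter_right ?_
    exact isClosed_eq ((hGc.comp continuous_snd).sub (hGc.comp continuous_fst)) continuous_const
  have hCne : C.Nonempty := by
    refine ⟨(a₁, x₀), ⟨⟨le_rfl, ha₁x₀.le⟩, ha₁x₀.le.trans (by have := div_pos hV hmpos; linarith), ?_⟩, by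
      simpa using ha₁⟩
    have : 0 ≤ V / m := by positivity
    linarith
  obtain ⟨⟨p, q⟩, hpqC, hminC⟩ := hCcomp.exists_isMinOn hCne
    (((hcont.comp continuous_fst).add (hcont.comp continuous_snd)).continuousOn)
  have hminC' : ∀ r ∈ C, f p + f q ≤ f r.1 + f r.2 := fun r hr => hminC hr
  have hpqV : G q - G p = V := hpqC.2
  have hpq : p < q := by
    have : G p < G q := by linarith
    exact hGmono.lt_iff_lt.mp this
  -- global minimality among all volume-V intervals
  have hglobal : ∀ α β : ℝ, G β - G α = V → f p + f q ≤ f α + f β := by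
    intro α β hαβV
    have hαβ : α < β := hGmono.lt_iff_lt.mp (by linarith)
    rcases le_or_gt α a₁ with h | h
    · have h1 := hminC' (a₁, x₀) ⟨⟨⟨le_rfl, ha₁x₀.le⟩, ha₁x₀.le.trans (by have := div_pos hV hmpos; linarith), by
        have : 0 ≤ V / m := (div_pos hV hmpos).le
        linarith⟩, by simpa using ha₁⟩
      have h2 : f a₁ ≤ f α := hanti α a₁ h ha₁x₀.le
      have h3 : m ≤ f β := hm β
      simp only at h1
      linarith
    · rcases le_or_gt α x₀ with h2 | h2
      · have hβub : β ≤ x₀ + V / m := by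
          have hGβ : G β ≤ G (x₀ + V / m) := by
            have := hGmono.monotone h2
            linarith
          exact hGmono.le_iff_le.mp hGβ
        have : (α, β) ∈ C := ⟨⟨⟨h.le, h2⟩, ⟨h.le.trans hαβ.le, hβub⟩⟩, hαβV⟩
        exact hminC' (α, β) this
      · obtain ⟨q₀, hq₀gt, hq₀⟩ := hnext x₀
        have hq₀ub : q₀ ≤ x₀ + V / m := hGmono.le_iff_le.mp (by linarith)
        have h1 := hminC' (x₀, q₀) ⟨⟨⟨ha₁x₀.le, le_rfl⟩, ha₁x₀.le.trans hq₀gt.le, hq₀ub⟩, by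
          simpa using hq₀⟩
        have h2' : m ≤ f α := hm α
        have h3 : f q₀ ≤ f β := by
          refine hmono q₀ β hq₀gt.le ?_
          refine hGmono.le_iff_le.mp ?_
          have := hGmono.monotone h2.le
          linarith
        simp only at h1
        linarith [h2']
  -- key comparison lemma
  have key : ∀ U : Set ℝ, IsOpen U → wvol f U = ENNReal.ofReal V → wper f U ≠ ⊤ →
      ∃ u w : ℝ, u < w ∧ u ∈ frontier U ∧ w ∈ frontier U ∧
        f p + f q ≤ f u + f w ∧
        ENNReal.ofReal (f u) + ENNReal.ofReal (f w) ≤ wper f U ∧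
        (U = Set.Ioo u w ∨
          ENNReal.ofReal (f u) + ENNReal.ofReal (f w) + ENNReal.ofReal m ≤ wper f U) := by
    intro U hUopen hUvol hUper
    have hvol0 : wvol f U ≠ 0 := by
      rw [hUvol]
      exact (ENNReal.ofReal_pos.mpr hV).ne'
    have hvoltop : wvol f U ≠ ⊤ := by
      rw [hUvol]; exact ENNReal.ofReal_ne_top
    obtain ⟨u, w, huw, hUsub, humem, hwmem, hdich⟩ :=
      structure_lemma hmpos hm hUopen hvol0 hvoltop hUper
    have hVle : V ≤ G w - G u := by
      have h1 : wvol f U ≤ wvol f (Ioo u w) := wvol_mono f hUsub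
      rw [hUvol, hvolG u w huw.le] at h1
      have h2 : 0 ≤ G w - G u := by nlinarith [hGlb u w huw.le]
      exact (ENNReal.ofReal_le_ofReal_iff h2).mp h1
    obtain ⟨α, β, hαβ, hαβV, hfα, hfβ⟩ := hselect u w huw hVle
    have hfpq : f p + f q ≤ f u + f w := (hglobal α β hαβV).trans (by linarith)
    have hsum2 : ENNReal.ofReal (f u) + ENNReal.ofReal (f w) ≤ wper f U := by
      have := sum_le_wper f {u, w} (by
        intro x hx
        simp only [Finset.coe_insert, Finset.coe_singleton, mem_insert_iff,
          mem_singleton_iff] at hx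
        rcases hx with h | h <;> subst h
        · exact humem
        · exact hwmem)
      rwa [Finset.sum_pair huw.ne] at this
    refine ⟨u, w, huw, humem, hwmem, hfpq, hsum2, ?_⟩
    rcases hdich with h | ⟨z, hzmem, hzu, hzw⟩
    · exact Or.inl h
    · right
      have hdist : ({u, w, z} : Finset ℝ).card = 3 := by
        rw [Finset.card_insert_of_notMem (by simp [huw.ne, Ne.symm hzu]),
          Finset.card_insert_of_notMem (by simp [Ne.symm hzw])]
        rfl
      have := sum_le_wper f {u, w, z} (by
        intro x hx
        simp only [Finset.coe_insert, Finset.coe_singleton, mem_insert_iff,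
          mem_singleton_iff] at hx
        rcases hx with h | h | h <;> subst h
        · exact humem
        · exact hwmem
        · exact hzmem)
      rw [Finset.sum_insert (by simp [huw.ne, Ne.symm hzu]),
        Finset.sum_insert (by simp [Ne.symm hzw]), Finset.sum_singleton] at this
      calc ENNReal.ofReal (f u) + ENNReal.ofReal (f w) + ENNReal.ofReal m
          ≤ ENNReal.ofReal (f u) + ENNReal.ofReal (f w) + ENNReal.ofReal (f z) := by
            gcongr
            exact hm z
        _ = ENNReal.ofReal (f u) + (ENNReal.ofReal (f w) + ENNReal.ofReal (f z)) := by ring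
        _ ≤ wper f U := this
  -- the minimizer
  have hΩvol : wvol f (Ioo p q) = ENNReal.ofReal V := by
    rw [hvolG p q hpq.le, hpqV]
  have hΩper : wper f (Ioo p q) = ENNReal.ofReal (f p) + ENNReal.ofReal (f q) :=
    wper_Ioo f hpq
  have hΩmin : IsIsopRegion f (Ioo p q) (ENNReal.ofReal V) := by
    refine ⟨isOpen_Ioo, hΩvol, ?_⟩
    intro U hUopen hUvol
    by_cases hUper : wper f U = ⊤
    · rw [hUper]; exact le_top
    obtain ⟨u, w, huw, _, _, hfpq, hsum2, _⟩ := key U hUopen hUvol hUper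
    rw [hΩper]
    calc ENNReal.ofReal (f p) + ENNReal.ofReal (f q)
        = ENNReal.ofReal (f p + f q) := by
          rw [ENNReal.ofReal_add (hpos p).le (hpos q).le]
      _ ≤ ENNReal.ofReal (f u + f w) := ENNReal.ofReal_le_ofReal hfpq
      _ = ENNReal.ofReal (f u) + ENNReal.ofReal (f w) := by
          rw [ENNReal.ofReal_add (hpos u).le (hpos w).le]
      _ ≤ wper f U := hsum2
  refine ⟨⟨Ioo p q, hΩmin⟩, ?_⟩
  -- characterization of minimizers
  intro Ω hΩ
  obtain ⟨hΩopen, hΩvol', hΩminprop⟩ := hΩ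
  have hperle : wper f Ω ≤ ENNReal.ofReal (f p) + ENNReal.ofReal (f q) := by
    have := hΩminprop (Ioo p q) isOpen_Ioo hΩvol
    rwa [hΩper] at this
  have hΩperne : wper f Ω ≠ ⊤ := by
    intro h
    rw [h] at hperle
    have hfin : ENNReal.ofReal (f p) + ENNReal.ofReal (f q) < ⊤ :=
      ENNReal.add_lt_top.mpr ⟨ENNReal.ofReal_lt_top, ENNReal.ofReal_lt_top⟩
    exact hfin.ne (top_le_iff.mp hperle)
  obtain ⟨u, w, huw, humem, hwmem, hfpq, hsum2, hdich⟩ := key Ω hΩopen hΩvol' hΩperne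
  rcases hdich with hΩeq | hextra
  · -- Ω = Ioo u w; find the minimum point in [u, w]
    refine ⟨u, w, huw, hΩeq, ?_⟩
    by_contra hno
    push_neg at hno
    have hgt : ∀ c ∈ Icc u w, m < f c := by
      intro c hc
      obtain ⟨y, hy⟩ := hno c hc
      have := hm y
      linarith
    have hx₀out : x₀ ∉ Icc u w := by
      intro h
      exact absurd (hgt x₀ h) (lt_irrefl m)
    have hΩVeq : G w - G u = V := by
      have h1 : wvol f Ω = ENNReal.ofReal (G w - G u) := by
        rw [hΩeq, hvolG u w huw.le]
      rw [hΩvol'] at h1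
      have h2 : 0 < G w - G u := by nlinarith [hGlb u w huw.le]
      exact ((ENNReal.ofReal_eq_ofReal_iff h2.le hV.le).mp h1.symm)
    have hΩper' : wper f Ω = ENNReal.ofReal (f u + f w) := by
      rw [hΩeq, wper_Ioo f huw, ENNReal.ofReal_add (hpos u).le (hpos w).le]
    -- build a strictly better interval
    have hbetter : ∃ u' w', u' < w' ∧ G w' - G u' = V ∧ f u' + f w' < f u + f w := by
      rw [mem_Icc] at hx₀out
      push_neg at hx₀out
      rcases lt_or_ge x₀ u with hcase | hcase
      · -- the interval lies to the right of x₀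
        have hfu : m < f u := hgt u ⟨le_rfl, huw.le⟩
        obtain ⟨u', hu'mem, hu'val⟩ := intermediate_value_Icc hcase.le hcont.continuousOn
          (show (m + f u) / 2 ∈ Icc (f x₀) (f u) from ⟨by rw [← hmdef]; linarith, by linarith⟩)
        have hu'lt : f u' < f u := by rw [hu'val]; linarith
        obtain ⟨w', hw'gt, hw'V⟩ := hnext u'
        have hw'le : w' ≤ w := by
          refine hGmono.le_iff_le.mp ?_
          have := hGmono.monotone hu'mem.2
          linarith
        have hfw' : f w' ≤ f w := hmono w' w (hu'mem.1.trans hw'gt.le) hw'le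
        exact ⟨u', w', hw'gt, hw'V, by linarith⟩
      · -- the interval lies to the left of x₀
        have hwx₀ : w < x₀ := hx₀out hcase
        have hfw : m < f w := hgt w ⟨huw.le, le_rfl⟩
        obtain ⟨w', hw'mem, hw'val⟩ := intermediate_value_Icc' hwx₀.le hcont.continuousOn
          (show (m + f w) / 2 ∈ Icc (f x₀) (f w) from ⟨by rw [← hmdef]; linarith, by linarith⟩)
        have hw'lt : f w' < f w := by rw [hw'val]; linarith
        obtain ⟨u', hu'lt, hu'V⟩ := hprev w'
        have hu'ge : u ≤ u' := by
          refine hGmono.le_iff_le.mp ?_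
          have := hGmono.monotone hw'mem.1
          linarith
        have hfu' : f u' ≤ f u := hanti u u' hu'ge (hu'lt.le.trans hw'mem.2)
        exact ⟨u', w', hu'lt, hu'V, by linarith⟩
    obtain ⟨u', w', hu'w', hV', hlt⟩ := hbetter
    have hcomp := hΩminprop (Ioo u' w') isOpen_Ioo (by rw [hvolG u' w' hu'w'.le, hV'])
    rw [hΩper', wper_Ioo f hu'w', ← ENNReal.ofReal_add (hpos u').le (hpos w').le] at hcomp
    have := (ENNReal.ofReal_lt_ofReal_iff (by have := hpos u; have := hpos w; linarith)).mpr hlt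
    exact absurd hcomp (not_le.mpr this)
  · -- extra frontier point: contradiction with minimality
    exfalso
    have hlt : wper f (Ioo p q) < wper f Ω := by
      calc wper f (Ioo p q) = ENNReal.ofReal (f p) + ENNReal.ofReal (f q) := hΩper
        _ < ENNReal.ofReal (f u) + ENNReal.ofReal (f w) + ENNReal.ofReal m := by
            refine lt_of_le_of_lt ?_ (ENNReal.lt_add_right ?_ ?_)
            · rw [← ENNReal.ofReal_add (hpos p).le (hpos q).le,
                ← ENNReal.ofReal_add (hpos u).le (hpos w).le]
              exact ENNReal.ofReal_le_ofReal hfpq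
            · exact (ENNReal.add_lt_top.mpr ⟨ENNReal.ofReal_lt_top, ENNReal.ofReal_lt_top⟩).ne
            · exact (ENNReal.ofReal_pos.mpr hmpos).ne'
        _ ≤ wper f Ω := hextra
    exact absurd (hΩminprop (Ioo p q) isOpen_Ioo hΩvol) (not_le.mpr hlt)
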